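/- Let E = EuclideanSpace ℝ (Fin n), x₀ ∈ E, and a, a', b, b' ∈ E ∖ {x₀} with a ≠ a' and b ≠ b'. Then the following are equivalent: (1) there exist f, g : ℝ → E, continuous on [0,1], with f 0 = a, g 0 = a', f 1 = b, g 1 = b', f t ≠ g t, f t ≠ x₀ and g t ≠ x₀ for all t ∈ [0,1], and such that the path t ↦ ((f t, g t) : WithLp 2 (E × E)) has eVariationOn over Set.Icc 0 1 equal to ENNReal.ofReal (dist ((a,a') : WithLp 2 (E × E)) ((b,b') : WithLp 2 (E × E))); (2) there is no λ < 0 with b − b' = λ•(a − a'), and x₀ ∉ segment ℝ a b, and x₀ ∉ segment ℝ a' b'. -/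

import Mathlib

open Set

lemma lin_evar {M : Type*} [NormedAddCommGroup M] [NormedSpace ℝ M] (A B : M) :
    eVariationOn (fun t : ℝ => (1-t)•A + t•B) (Set.Icc 0 1) = ENNReal.ofReal (dist A B) := by
  have key : ∀ t : ℝ, (1-t)•A + t•B = A + t•(B - A) := by
    intro t; module
  have lip : LipschitzWith ‖B - A‖₊ (fun t : ℝ => A + t•(B - A)) := by
    apply LipschitzWith.of_dist_le_mul
    intro x y
    have h : A + x•(B-A) - (A + y•(B-A)) = (x - y)•(B-A) := by module
    rw [dist_eq_norm, h, norm_smul, Real.dist_eq, Real.norm_eq_abs, coe_nnnorm, mul_comm]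
  apply le_antisymm
  · have h1 : eVariationOn (id : ℝ → ℝ) (Set.Icc 0 1) ≤ ENNReal.ofReal 1 := by
      have := monotoneOn_id (s := Set.Icc (0:ℝ) 1) |>.eVariationOn_le
        (a := 0) (b := 1) (by simp) (by simp)
      simpa using this
    have h2 := (lipschitzOnWith_univ.mpr lip).comp_eVariationOn_le
      (g := (id : ℝ → ℝ)) (s := Set.Icc 0 1) (Set.mapsTo_univ _ _)
    rw [Function.comp_id] at h2
    calc eVariationOn (fun t : ℝ => (1-t)•A + t•B) (Set.Icc 0 1)
        = eVariationOn (fun t : ℝ => A + t•(B - A)) (Set.Icc 0 1) := by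
          congr 1; funext t; exact key t
      _ ≤ ‖B - A‖₊ * eVariationOn (id : ℝ → ℝ) (Set.Icc 0 1) := h2
      _ ≤ ‖B - A‖₊ * ENNReal.ofReal 1 := by exact mul_le_mul_right h1 _
      _ = ENNReal.ofReal (dist A B) := by
          rw [ENNReal.ofReal_one, mul_one, dist_eq_norm', ← coe_nnnorm, ENNReal.ofReal_coe_nnreal]
  · have h0 : (0:ℝ) ∈ Set.Icc (0:ℝ) 1 := by simp
    have h1 : (1:ℝ) ∈ Set.Icc (0:ℝ) 1 := by simp
    have := eVariationOn.edist_le (fun t : ℝ => (1-t)•A + t•B) h0 h1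
    simpa [edist_dist] using this

lemma seg_param {M : Type*} [NormedAddCommGroup M] [NormedSpace ℝ M] {A B P : M}
    (hP : P ∈ segment ℝ A B) (hD : A ≠ B) {s : ℝ}
    (hs : dist A P = s * dist A B) : P = (1-s)•A + s•B := by
  rw [segment_eq_image] at hP
  obtain ⟨u, hu, rfl⟩ := hP
  have hdist : dist A ((1-u)•A + u•B) = u * dist A B := by
    rw [dist_eq_norm', dist_eq_norm']
    have h : (1-u)•A + u•B - A = u • (B - A) := by module
    rw [h, norm_smul, Real.norm_eq_abs, abs_of_nonneg hu.1]
  have : u = s := by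
    have := hdist.symm.trans hs
    exact mul_right_cancel₀ (dist_ne_zero.2 hD) this
  rw [this]

/-- In the ordered configuration space `F(ℝⁿ ∖ {x₀}, 2)` with the ℓ² product metric, the
configurations `(a,a')` and `(b,b')` are joined by a geodesic iff the direct linear
motions do not collide and neither segment `ab`, `a'b'` passes through `x₀`. -/
theorem exists_geodesic_punctured_config_iff {n : ℕ}
    (x₀ a a' b b' : EuclideanSpace ℝ (Fin n))
    (hax : a ≠ x₀) (ha'x : a' ≠ x₀) (hbx : b ≠ x₀) (hb'x : b' ≠ x₀)
    (ha : a ≠ a') (hb : b ≠ b') :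
    (∃ f g : ℝ → EuclideanSpace ℝ (Fin n),
      ContinuousOn f (Set.Icc 0 1) ∧ ContinuousOn g (Set.Icc 0 1) ∧
      f 0 = a ∧ g 0 = a' ∧ f 1 = b ∧ g 1 = b' ∧
      (∀ t ∈ Set.Icc (0 : ℝ) 1, f t ≠ g t) ∧
      (∀ t ∈ Set.Icc (0 : ℝ) 1, f t ≠ x₀) ∧
      (∀ t ∈ Set.Icc (0 : ℝ) 1, g t ≠ x₀) ∧
      eVariationOn
        (fun t : ℝ =>
          (WithLp.equiv 2 (EuclideanSpace ℝ (Fin n) × EuclideanSpace ℝ (Fin n))).symm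
            (f t, g t))
        (Set.Icc 0 1) =
        ENNReal.ofReal
          (dist
            ((WithLp.equiv 2 (EuclideanSpace ℝ (Fin n) × EuclideanSpace ℝ (Fin n))).symm
              (a, a'))
            ((WithLp.equiv 2 (EuclideanSpace ℝ (Fin n) × EuclideanSpace ℝ (Fin n))).symm
              (b, b')))) ↔
    ((¬ ∃ l : ℝ, l < 0 ∧ b - b' = l • (a - a')) ∧
      x₀ ∉ segment ℝ a b ∧ x₀ ∉ segment ℝ a' b') := by
  constructor
  · rintro ⟨f, g, hf, hg, hf0, hg0, hf1, hg1, hne, hfx, hgx, hvar⟩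
    set A : WithLp 2 (EuclideanSpace ℝ (Fin n) × EuclideanSpace ℝ (Fin n)) :=
      (WithLp.equiv 2 (EuclideanSpace ℝ (Fin n) × EuclideanSpace ℝ (Fin n))).symm (a, a')
      with hA
    set B : WithLp 2 (EuclideanSpace ℝ (Fin n) × EuclideanSpace ℝ (Fin n)) :=
      (WithLp.equiv 2 (EuclideanSpace ℝ (Fin n) × EuclideanSpace ℝ (Fin n))).symm (b, b')
      with hB
    set F : ℝ → WithLp 2 (EuclideanSpace ℝ (Fin n) × EuclideanSpace ℝ (Fin n)) :=
      fun t : ℝ =>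
        (WithLp.equiv 2 (EuclideanSpace ℝ (Fin n) × EuclideanSpace ℝ (Fin n))).symm (f t, g t)
      with hF
    have hF0 : F 0 = A := by simp only [hF, hA, hf0, hg0]
    have hF1 : F 1 = B := by simp only [hF, hB, hf1, hg1]
    -- every point of the path lies on the segment [A, B]
    have hseg : ∀ t ∈ Set.Icc (0:ℝ) 1, F t ∈ segment ℝ A B := by
      intro t ht
      have e1 : edist A (F t) ≤ eVariationOn F (Set.Icc 0 1 ∩ Set.Icc 0 t) := by
        rw [← hF0]
        exact eVariationOn.edist_le F ⟨by simp [ht.1], le_refl 0, ht.1⟩ ⟨ht, ht.1, le_refl t⟩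
      have e2 : edist (F t) B ≤ eVariationOn F (Set.Icc 0 1 ∩ Set.Icc t 1) := by
        rw [← hF1]
        exact eVariationOn.edist_le F ⟨ht, le_refl t, ht.2⟩ ⟨by simp [ht.2], ht.2, le_refl 1⟩
      have esum : edist A (F t) + edist (F t) B ≤ ENNReal.ofReal (dist A B) := by
        calc edist A (F t) + edist (F t) B
            ≤ eVariationOn F (Set.Icc 0 1 ∩ Set.Icc 0 t)
              + eVariationOn F (Set.Icc 0 1 ∩ Set.Icc t 1) := add_le_add e1 e2
          _ = eVariationOn F (Set.Icc 0 1 ∩ Set.Icc 0 1) :=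
              eVariationOn.Icc_add_Icc F ht.1 ht.2 ht
          _ = ENNReal.ofReal (dist A B) := by rw [Set.inter_self]; exact hvar
      have hreal : dist A (F t) + dist (F t) B ≤ dist A B := by
        rw [edist_dist, edist_dist, ← ENNReal.ofReal_add dist_nonneg dist_nonneg] at esum
        exact (ENNReal.ofReal_le_ofReal_iff dist_nonneg).1 esum
      have heq : dist A (F t) + dist (F t) B = dist A B :=
        le_antisymm hreal (dist_triangle A (F t) B)
      exact mem_segment_iff_wbtw.2 (dist_add_dist_eq_iff.1 heq)
    -- the path covers the whole segment
    have hcover : ∀ s₀ ∈ Set.Icc (0:ℝ) 1, ∃ t ∈ Set.Icc (0:ℝ) 1,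
        f t = (1-s₀)•a + s₀•b ∧ g t = (1-s₀)•a' + s₀•b' := by
      intro s₀ hs₀
      by_cases hAB : A = B
      · rw [hA, hB] at hAB
        have hab := (WithLp.equiv 2
          (EuclideanSpace ℝ (Fin n) × EuclideanSpace ℝ (Fin n))).symm.injective hAB
        have hab1 : a = b := congrArg Prod.fst hab
        have hab2 : a' = b' := congrArg Prod.snd hab
        refine ⟨0, by simp, ?_, ?_⟩
        · rw [hf0, ← hab1, ← add_smul]; norm_num
        · rw [hg0, ← hab2, ← add_smul]; norm_num
      · have hD : 0 < dist A B := dist_pos.2 hAB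
        have hcontF : ContinuousOn F (Set.Icc 0 1) :=
          (WithLp.prodContinuousLinearEquiv 2 ℝ
            (EuclideanSpace ℝ (Fin n)) (EuclideanSpace ℝ (Fin n))).symm.continuous.comp_continuousOn
            (hf.prodMk hg)
        have hconth : ContinuousOn (fun t => dist A (F t)) (Set.Icc 0 1) :=
          (continuous_const.dist continuous_id).comp_continuousOn hcontF
        have hivt := intermediate_value_Icc (zero_le_one) hconth
        have hmem : s₀ * dist A B ∈ Set.Icc (dist A (F 0)) (dist A (F 1)) := by
          rw [hF0, hF1, dist_self]
          constructor
          · exact mul_nonneg hs₀.1 hD.le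
          · calc s₀ * dist A B ≤ 1 * dist A B :=
                mul_le_mul_of_nonneg_right hs₀.2 hD.le
              _ = dist A B := one_mul _
        obtain ⟨t, ht, hht⟩ := hivt hmem
        have hFt : F t = (1-s₀)•A + s₀•B := seg_param (hseg t ht) hAB hht
        have hone : ((WithLp.equiv 2
            (EuclideanSpace ℝ (Fin n) × EuclideanSpace ℝ (Fin n))).symm
              ((1-s₀)•a + s₀•b, (1-s₀)•a' + s₀•b')) = (1-s₀)•A + s₀•B := by
          rw [hA, hB]; rfl
        rw [hF, ← hone] at hFt
        have hcomp := (WithLp.equiv 2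
          (EuclideanSpace ℝ (Fin n) × EuclideanSpace ℝ (Fin n))).symm.injective hFt
        exact ⟨t, ht, congrArg Prod.fst hcomp, congrArg Prod.snd hcomp⟩
    refine ⟨?_, ?_, ?_⟩
    · rintro ⟨l, hl, hbl⟩
      have h1l : (0:ℝ) < 1 - l := by linarith
      set s₀ : ℝ := (1 - l)⁻¹ with hs₀def
      have hs₀mem : s₀ ∈ Set.Icc (0:ℝ) 1 := by
        constructor
        · positivity
        · rw [hs₀def]
          apply inv_le_one_of_one_le₀
          linarith
      obtain ⟨t, ht, hft, hgt⟩ := hcover s₀ hs₀mem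
      apply hne t ht
      rw [hft, hgt]
      have hkey : (1 - s₀) + s₀ * l = 0 := by
        rw [hs₀def]; field_simp; ring
      have hdiff : ((1-s₀)•a + s₀•b) - ((1-s₀)•a' + s₀•b')
          = (1-s₀)•(a - a') + s₀•(b - b') := by module
      rw [← sub_eq_zero, hdiff, hbl, smul_smul, ← add_smul, hkey, zero_smul]
    · intro hx
      rw [segment_eq_image] at hx
      obtain ⟨s₀, hs₀, hxe⟩ := hx
      obtain ⟨t, ht, hft, _⟩ := hcover s₀ hs₀
      exact hfx t ht (by rw [hft]; exact hxe)
    · intro hx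
      rw [segment_eq_image] at hx
      obtain ⟨s₀, hs₀, hxe⟩ := hx
      obtain ⟨t, ht, _, hgt⟩ := hcover s₀ hs₀
      exact hgx t ht (by rw [hgt]; exact hxe)
  · rintro ⟨h1, h2, h3⟩
    refine ⟨fun t => (1-t)•a + t•b, fun t => (1-t)•a' + t•b',
      ?_, ?_, ?_, ?_, ?_, ?_, ?_, ?_, ?_, ?_⟩
    · exact (((continuous_const.sub continuous_id).smul continuous_const).add
        (continuous_id.smul continuous_const)).continuousOn
    · exact (((continuous_const.sub continuous_id).smul continuous_const).add
        (continuous_id.smul continuous_const)).continuousOn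
    · norm_num
    · norm_num
    · norm_num
    · norm_num
    · intro t ht heq
      simp only at heq
      have hd : (1-t)•(a - a') + t•(b - b') = 0 := by
        have hdiff : ((1-t)•a + t•b) - ((1-t)•a' + t•b')
            = (1-t)•(a - a') + t•(b - b') := by module
        rw [← hdiff, heq, sub_self]
      by_cases ht0 : t = 0
      · subst ht0
        simp only [sub_zero, one_smul, zero_smul, add_zero] at hd
        exact ha (sub_eq_zero.1 hd)
      by_cases ht1 : t = 1
      · subst ht1
        simp only [sub_self, zero_smul, one_smul, zero_add] at hd
        exact hb (sub_eq_zero.1 hd)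
      have htpos : 0 < t := lt_of_le_of_ne ht.1 (Ne.symm ht0)
      have htlt : t < 1 := lt_of_le_of_ne ht.2 ht1
      apply h1
      refine ⟨-((1-t)/t), ?_, ?_⟩
      · have : 0 < (1-t)/t := div_pos (by linarith) htpos
        linarith
      · have h5 : t • (b - b') = (-(1-t)) • (a - a') := by
          have := eq_neg_of_add_eq_zero_right hd
          rwa [← neg_smul] at this
        have h6 := congrArg (fun v : EuclideanSpace ℝ (Fin n) => t⁻¹ • v) h5
        simp only [smul_smul] at h6
        rw [inv_mul_cancel₀ (ne_of_gt htpos), one_smul] at h6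
        rw [h6]
        congr 1
        field_simp
    · intro t ht heq
      simp only at heq
      exact h2 ⟨1-t, t, by linarith [ht.2], ht.1, by ring, heq⟩
    · intro t ht heq
      simp only at heq
      exact h3 ⟨1-t, t, by linarith [ht.2], ht.1, by ring, heq⟩
    · show eVariationOn
        (fun t : ℝ =>
          (WithLp.equiv 2 (EuclideanSpace ℝ (Fin n) × EuclideanSpace ℝ (Fin n))).symm
            ((1-t)•a + t•b, (1-t)•a' + t•b'))
        (Set.Icc 0 1) = _
      have hfun : (fun t : ℝ =>
          (WithLp.equiv 2 (EuclideanSpace ℝ (Fin n) × EuclideanSpace ℝ (Fin n))).symm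
            ((1-t)•a + t•b, (1-t)•a' + t•b'))
          = fun t : ℝ =>
            (1-t)•((WithLp.equiv 2
              (EuclideanSpace ℝ (Fin n) × EuclideanSpace ℝ (Fin n))).symm (a, a'))
            + t•((WithLp.equiv 2
              (EuclideanSpace ℝ (Fin n) × EuclideanSpace ℝ (Fin n))).symm (b, b')) := rfl
      rw [hfun, lin_evar]
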